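/- There is no linear operator T on ℝ^4 such that ℝ^4 has exactly 10 T-invariant subspaces. More precisely, the set of integers m for which some T ∈ L(ℝ^4) has exactly m invariant subspaces is {3, 4, 5, 6, 8, 9, 12, 16} (together with the possibility of infinitely many). -/

import Mathlib

section
open Polynomial UniqueFactorizationMonoid

noncomputable section

variable {α : Type*} [DecidableEq α]

private lemma count_sum_replicate (f : Multiset α) (g : (q : f.toFinset) → Fin (f.count q.1 + 1))
    (a : α) :
    Multiset.count a (∑ q ∈ f.toFinset.attach, Multiset.replicate (g q : ℕ) q.1) =
      if h : a ∈ f.toFinset then (g ⟨a, h⟩ : ℕ) else 0 := by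
  rw [Multiset.count_sum']
  simp only [Multiset.count_replicate]
  split
  · next h =>
    rw [Finset.sum_eq_single_of_mem ⟨a, h⟩ (Finset.mem_attach _ _)]
    · simp
    · intro b _ hb
      rw [if_neg]
      rintro rfl
      exact hb (Subtype.ext rfl)
  · next h =>
    apply Finset.sum_eq_zero
    intro b _
    rw [if_neg]
    rintro rfl
    exact h b.2

def subMultisetEquiv (f : Multiset α) :
    {t : Multiset α // t ≤ f} ≃ ((q : f.toFinset) → Fin (f.count q.1 + 1)) where
  toFun t q := ⟨t.1.count q.1, Nat.lt_succ_of_le (Multiset.le_iff_count.mp t.2 q.1)⟩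
  invFun g := ⟨∑ q ∈ f.toFinset.attach, Multiset.replicate (g q : ℕ) q.1, by
    rw [Multiset.le_iff_count]
    intro a
    rw [count_sum_replicate]
    split
    · next h => exact Nat.lt_succ_iff.mp (g ⟨a, h⟩).2
    · exact Nat.zero_le _⟩
  left_inv t := by
    ext : 1
    apply Multiset.ext.mpr
    intro a
    rw [count_sum_replicate]
    split
    · rfl
    · next h =>
      symm
      rw [Multiset.count_eq_zero]
      intro ha
      exact h (Multiset.mem_toFinset.mpr (Multiset.mem_of_le t.2 ha))
  right_inv g := by
    funext q
    apply Fin.ext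
    show Multiset.count q.1 _ = _
    rw [count_sum_replicate]
    rw [dif_pos q.2]

lemma card_subMultiset (f : Multiset α) :
    Nat.card {t : Multiset α // t ≤ f} = ∏ q ∈ f.toFinset, (f.count q + 1) := by
  rw [Nat.card_congr (subMultisetEquiv f), Nat.card_pi]
  rw [← Finset.prod_attach f.toFinset (fun q => f.count q + 1)]
  exact Finset.prod_congr rfl fun q _ => by simp

instance finite_subMultiset (f : Multiset α) : Finite {t : Multiset α // t ≤ f} :=
  Finite.of_equiv _ (subMultisetEquiv f).symm
end

section
open Polynomial UniqueFactorizationMonoid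

noncomputable section

variable {K : Type*} [Field K] [DecidableEq K] [DecidableEq (Polynomial K)]

set_option linter.unusedSectionVars false

lemma monic_of_mem_normalizedFactors {μ q : K[X]} (hq : q ∈ normalizedFactors μ) : q.Monic := by
  have h1 : normalize q = q := normalize_normalized_factor q hq
  have h2 : q ≠ 0 := (irreducible_of_normalized_factor q hq).ne_zero
  rw [← h1]
  exact monic_normalize h2

lemma monic_multiset_prod {t : Multiset K[X]} (h : ∀ q ∈ t, Monic q) : t.prod.Monic := by
  have := monic_multiset_prod_of_monic t (fun q => q) h
  rwa [Multiset.map_id'] at this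

def monicDivisorsEquiv (μ : K[X]) (hμ : μ.Monic) :
    {d : K[X] // d ∣ μ ∧ d.Monic} ≃ {t : Multiset K[X] // t ≤ normalizedFactors μ} where
  toFun d := ⟨normalizedFactors d.1,
    (dvd_iff_normalizedFactors_le_normalizedFactors d.2.2.ne_zero hμ.ne_zero).mp d.2.1⟩
  invFun t := ⟨t.1.prod, by
    have hmon : (t.1.prod).Monic :=
      monic_multiset_prod fun q hq =>
        monic_of_mem_normalizedFactors (Multiset.mem_of_le t.2 hq)
    refine ⟨?_, hmon⟩
    have h1 : t.1.prod ∣ (normalizedFactors μ).prod := Multiset.prod_dvd_prod_of_le t.2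
    exact h1.trans (prod_normalizedFactors hμ.ne_zero).dvd⟩
  left_inv d := by
    ext : 1
    show (normalizedFactors d.1).prod = d.1
    exact eq_of_monic_of_associated
      (monic_multiset_prod fun q hq => monic_of_mem_normalizedFactors hq)
      d.2.2 (prod_normalizedFactors d.2.2.ne_zero)
  right_inv t := by
    ext : 1
    show normalizedFactors (t.1.prod) = t.1
    have hirr : ∀ q ∈ t.1, Irreducible q := fun q hq =>
      irreducible_of_normalized_factor q (Multiset.mem_of_le t.2 hq)
    rw [normalizedFactors_prod_eq _ hirr]
    rw [show Multiset.map normalize t.1 = Multiset.map id t.1 from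
      Multiset.map_congr rfl fun q hq =>
        (monic_of_mem_normalizedFactors (Multiset.mem_of_le t.2 hq)).normalize_eq_self]
    exact Multiset.map_id _

def idealsEquivMonicDivisors (μ : K[X]) (hμ : μ.Monic) :
    {I : Ideal K[X] // Ideal.span {μ} ≤ I} ≃ {d : K[X] // d ∣ μ ∧ d.Monic} :=
  Equiv.symm <| Equiv.ofBijective
    (fun d => ⟨Ideal.span {d.1}, (Ideal.span_singleton_le_span_singleton).mpr d.2.1⟩)
    (by
      constructor
      · rintro ⟨d1, hd1⟩ ⟨d2, hd2⟩ h
        simp only [Subtype.mk.injEq] at h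
        exact Subtype.ext (eq_of_monic_of_associated hd1.2 hd2.2
          (Ideal.span_singleton_eq_span_singleton.mp h))
      · rintro ⟨I, hI⟩
        obtain ⟨g, hg'⟩ := (IsPrincipalIdealRing.principal I).principal
        have hg0 : g ≠ 0 := by
          rintro rfl
          rw [hg'] at hI
          rw [show Submodule.span K[X] ({0} : Set K[X]) = ⊥ from Submodule.span_zero_singleton _]
            at hI
          exact hμ.ne_zero (by simpa using hI (Ideal.mem_span_singleton_self μ))
        have hassoc : Associated g (g * C g.leadingCoeff⁻¹) :=
          associated_mul_unit_right g _
            (isUnit_C.mpr (isUnit_iff_ne_zero.mpr (inv_ne_zero (leadingCoeff_ne_zero.mpr hg0))))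
        have hspan : Ideal.span {g * C g.leadingCoeff⁻¹} = I := by
          rw [hg']
          exact (Ideal.span_singleton_eq_span_singleton.mpr hassoc).symm
        refine ⟨⟨g * C g.leadingCoeff⁻¹, ?_, monic_mul_leadingCoeff_inv hg0⟩, ?_⟩
        · rw [← Ideal.span_singleton_le_span_singleton, hspan]
          exact hI
        · exact Subtype.ext hspan)
end

section
variable {α : Type*} [DecidableEq α]

lemma prodcA (a : α) :
    ∏ q ∈ ({a, a, a, a} : Multiset α).toFinset, (Multiset.count q {a, a, a, a} + 1) = 5 := by
  simp [Multiset.toFinset_cons, Multiset.toFinset_singleton, Multiset.count_cons,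
    Multiset.count_singleton]

lemma prodcB (a b : α) (hab : a ≠ b) :
    ∏ q ∈ ({a, a, a, b} : Multiset α).toFinset, (Multiset.count q {a, a, a, b} + 1) = 8 := by
  simp [Multiset.toFinset_cons, Multiset.toFinset_singleton, Multiset.count_cons,
    Multiset.count_singleton, Finset.prod_insert, Finset.mem_insert, Finset.mem_singleton,
    hab, hab.symm]

lemma prodcC (a b : α) (hab : a ≠ b) :
    ∏ q ∈ ({a, a, b, b} : Multiset α).toFinset, (Multiset.count q {a, a, b, b} + 1) = 9 := by
  simp [Multiset.toFinset_cons, Multiset.toFinset_singleton, Multiset.count_cons,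
    Multiset.count_singleton, Finset.prod_insert, Finset.mem_insert, Finset.mem_singleton,
    hab, hab.symm]

lemma prodcD (a b c : α) (hab : a ≠ b) (hac : a ≠ c) (hbc : b ≠ c) :
    ∏ q ∈ ({a, a, b, c} : Multiset α).toFinset, (Multiset.count q {a, a, b, c} + 1) = 12 := by
  simp [Multiset.toFinset_cons, Multiset.toFinset_singleton, Multiset.count_cons,
    Multiset.count_singleton, Finset.prod_insert, Finset.mem_insert, Finset.mem_singleton,
    hab, hab.symm, hac, hac.symm, hbc, hbc.symm]

lemma prodcE (a b c d : α) (hab : a ≠ b) (hac : a ≠ c) (had : a ≠ d) (hbc : b ≠ c)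
    (hbd : b ≠ d) (hcd : c ≠ d) :
    ∏ q ∈ ({a, b, c, d} : Multiset α).toFinset, (Multiset.count q {a, b, c, d} + 1) = 16 := by
  simp [Multiset.toFinset_cons, Multiset.toFinset_singleton, Multiset.count_cons,
    Multiset.count_singleton, Finset.prod_insert, Finset.mem_insert, Finset.mem_singleton,
    hab, hab.symm, hac, hac.symm, had, had.symm, hbc, hbc.symm, hbd, hbd.symm, hcd, hcd.symm]

lemma prodcF (a b : α) (hab : a ≠ b) :
    ∏ q ∈ ({a, a, b} : Multiset α).toFinset, (Multiset.count q {a, a, b} + 1) = 6 := by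
  simp [Multiset.toFinset_cons, Multiset.toFinset_singleton, Multiset.count_cons,
    Multiset.count_singleton, Finset.prod_insert, Finset.mem_insert, Finset.mem_singleton,
    hab, hab.symm]

lemma prodcG (a b : α) (hab : a ≠ b) :
    ∏ q ∈ ({a, b} : Multiset α).toFinset, (Multiset.count q {a, b} + 1) = 4 := by
  simp [Multiset.toFinset_cons, Multiset.toFinset_singleton, Multiset.count_cons,
    Multiset.count_singleton, Finset.prod_insert, Finset.mem_insert, Finset.mem_singleton,
    hab, hab.symm]

lemma prodcH (a : α) :
    ∏ q ∈ ({a, a} : Multiset α).toFinset, (Multiset.count q {a, a} + 1) = 3 := by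
  simp [Multiset.toFinset_cons, Multiset.toFinset_singleton, Multiset.count_cons,
    Multiset.count_singleton]
end

section
open Polynomial

noncomputable section

lemma irred_X_sq_add_C (a : ℝ) (ha : 0 < a) : Irreducible ((X : ℝ[X]) ^ 2 + C a) := by
  have hdeg : ((X : ℝ[X]) ^ 2 + C a).natDegree = 2 := natDegree_X_pow_add_C
  rw [irreducible_iff_roots_eq_zero_of_degree_le_three (by rw [hdeg]) (by rw [hdeg]; norm_num)]
  rw [Multiset.eq_zero_iff_forall_notMem]
  intro x hx
  have h0 : ((X : ℝ[X]) ^ 2 + C a) ≠ 0 := (monic_X_pow_add_C a (by norm_num)).ne_zero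
  rw [mem_roots h0] at hx
  have := hx
  simp only [IsRoot, eval_add, eval_pow, eval_X, eval_C] at this
  nlinarith

lemma eval_ne_ne {p q : ℝ[X]} (h : p.eval 0 ≠ q.eval 0) : p ≠ q := fun hpq => h (by rw [hpq])

lemma neXC (b : ℝ) (hb : b ≠ 0) : (X : ℝ[X]) ≠ X - C b :=
  eval_ne_ne (by simp [hb])

lemma neCC (b c : ℝ) (hbc : b ≠ c) : (X : ℝ[X]) - C b ≠ X - C c :=
  eval_ne_ne (by simpa using fun h => hbc (by linarith))

lemma neXQ (a : ℝ) : (X : ℝ[X]) ≠ X ^ 2 + C a := fun h => by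
  have := congrArg natDegree h
  rw [natDegree_X, natDegree_X_pow_add_C] at this
  norm_num at this

lemma neCQ (b a : ℝ) : (X : ℝ[X]) - C b ≠ X ^ 2 + C a := fun h => by
  have := congrArg natDegree h
  rw [natDegree_X_sub_C, natDegree_X_pow_add_C] at this
  norm_num at this

lemma neQQ (a b : ℝ) (hab : a ≠ b) : (X : ℝ[X]) ^ 2 + C a ≠ X ^ 2 + C b :=
  eval_ne_ne (by simpa using hab)
end

section
open Polynomial UniqueFactorizationMonoid

noncomputable section

-- combinatorial core
lemma invt_list_prod_mem : ∀ l : List (ℕ × ℕ), (∀ p ∈ l, 1 ≤ p.1 ∧ 1 ≤ p.2 ∧ p.2 ≤ 2) →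
    (l.map fun p => p.1 * p.2).sum = 4 →
    (l.map fun p => p.1 + 1).prod ∈ ({3, 4, 5, 6, 8, 9, 12, 16} : Set ℕ)
  | [], _, hs => by simp at hs
  | [(c, d)], hl, hs => by
    simp only [List.mem_singleton, forall_eq] at hl
    simp only [List.map_cons, List.map_nil, List.sum_cons, List.sum_nil, List.prod_cons,
      List.prod_nil, add_zero, mul_one] at hs ⊢
    simp only [Set.mem_insert_iff, Set.mem_singleton_iff]
    obtain ⟨h1, h2, h3⟩ := hl
    interval_cases d <;> omega
  | [(c1, d1), (c2, d2)], hl, hs => by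
    have h1 := hl (c1, d1) (by simp)
    have h2 := hl (c2, d2) (by simp)
    simp only at h1 h2
    simp only [List.map_cons, List.map_nil, List.sum_cons, List.sum_nil, List.prod_cons,
      List.prod_nil, add_zero, mul_one] at hs ⊢
    simp only [Set.mem_insert_iff, Set.mem_singleton_iff]
    obtain ⟨h11, h12, h13⟩ := h1
    obtain ⟨h21, h22, h23⟩ := h2
    have hc1 : c1 ≤ 4 := by nlinarith
    have hc2 : c2 ≤ 4 := by nlinarith
    interval_cases d1 <;> interval_cases d2 <;> interval_cases c1 <;> interval_cases c2 <;> omega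
  | [(c1, d1), (c2, d2), (c3, d3)], hl, hs => by
    have h1 := hl (c1, d1) (by simp)
    have h2 := hl (c2, d2) (by simp)
    have h3 := hl (c3, d3) (by simp)
    simp only at h1 h2 h3
    simp only [List.map_cons, List.map_nil, List.sum_cons, List.sum_nil, List.prod_cons,
      List.prod_nil, add_zero, mul_one] at hs ⊢
    simp only [Set.mem_insert_iff, Set.mem_singleton_iff]
    obtain ⟨h11, h12, h13⟩ := h1
    obtain ⟨h21, h22, h23⟩ := h2
    obtain ⟨h31, h32, h33⟩ := h3
    have hc1 : c1 ≤ 2 := by nlinarith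
    have hc2 : c2 ≤ 2 := by nlinarith
    have hc3 : c3 ≤ 2 := by nlinarith
    interval_cases d1 <;> interval_cases d2 <;> interval_cases d3 <;>
      interval_cases c1 <;> interval_cases c2 <;> interval_cases c3 <;> omega
  | ((c1, d1) :: (c2, d2) :: (c3, d3) :: (c4, d4) :: rest), hl, hs => by
    have h1 := hl (c1, d1) (by simp)
    have h2 := hl (c2, d2) (by simp)
    have h3 := hl (c3, d3) (by simp)
    have h4 := hl (c4, d4) (by simp)
    simp only at h1 h2 h3 h4
    have hrest : ∀ p ∈ rest, 1 ≤ p.1 * p.2 := by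
      intro p hp
      obtain ⟨a1, a2, a3⟩ := hl p (by simp [hp])
      exact Nat.one_le_iff_ne_zero.mpr (Nat.mul_ne_zero (by omega) (by omega))
    have hrest' : (rest.map fun p => p.1 * p.2).sum + (c1*d1 + c2*d2 + c3*d3 + c4*d4) = 4 := by
      simp only [List.map_cons, List.sum_cons] at hs
      omega
    -- each term ≥ 1 so all four are 1 and rest is empty
    have hone : c1*d1 = 1 ∧ c2*d2 = 1 ∧ c3*d3 = 1 ∧ c4*d4 = 1 ∧
        (rest.map fun p => p.1 * p.2).sum = 0 := by
      have b1 : 1 ≤ c1*d1 := Nat.one_le_iff_ne_zero.mpr (Nat.mul_ne_zero (by omega) (by omega))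
      have b2 : 1 ≤ c2*d2 := Nat.one_le_iff_ne_zero.mpr (Nat.mul_ne_zero (by omega) (by omega))
      have b3 : 1 ≤ c3*d3 := Nat.one_le_iff_ne_zero.mpr (Nat.mul_ne_zero (by omega) (by omega))
      have b4 : 1 ≤ c4*d4 := Nat.one_le_iff_ne_zero.mpr (Nat.mul_ne_zero (by omega) (by omega))
      omega
    obtain ⟨e1, e2, e3, e4, e5⟩ := hone
    have hrnil : rest = [] := by
      cases rest with
      | nil => rfl
      | cons p r =>
        exfalso
        have := hrest p (by simp)
        simp only [List.map_cons, List.sum_cons] at e5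
        omega
    subst hrnil
    have f1 := Nat.eq_one_of_mul_eq_one_right e1
    have f2 := Nat.eq_one_of_mul_eq_one_right e2
    have f3 := Nat.eq_one_of_mul_eq_one_right e3
    have f4 := Nat.eq_one_of_mul_eq_one_right e4
    simp only [List.map_cons, List.map_nil, List.prod_cons, List.prod_nil,
      Set.mem_insert_iff, Set.mem_singleton_iff]
    subst f1 f2 f3 f4
    omega
end

section
open Polynomial UniqueFactorizationMonoid

noncomputable section

lemma prod_count_mem (μ : ℝ[X]) (hμ : μ.Monic) (h4 : μ.natDegree = 4)
    [DecidableEq ℝ] [DecidableEq (Polynomial ℝ)] :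
    ∏ q ∈ (normalizedFactors μ).toFinset, ((normalizedFactors μ).count q + 1) ∈
      ({3, 4, 5, 6, 8, 9, 12, 16} : Set ℕ) := by
  set f := normalizedFactors μ with hf
  set s := f.toFinset with hs
  set l : List (ℕ × ℕ) := s.toList.map (fun q => (f.count q, q.natDegree)) with hl
  have hprod : (l.map fun p => p.1 + 1).prod = ∏ q ∈ s, (f.count q + 1) := by
    rw [hl, List.map_map]
    exact Finset.prod_map_toList s (fun q => f.count q + 1)
  have hfprod : f.prod = μ :=
    eq_of_monic_of_associated
      (monic_multiset_prod fun q hq => monic_of_mem_normalizedFactors hq)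
      hμ (prod_normalizedFactors hμ.ne_zero)
  have hzero : (0 : ℝ[X]) ∉ f := zero_notMem_normalizedFactors μ
  have hsum : (l.map fun p => p.1 * p.2).sum = 4 := by
    rw [hl, List.map_map]
    have h1 : (s.toList.map ((fun p : ℕ × ℕ => p.1 * p.2) ∘ fun q => (f.count q, q.natDegree))).sum
        = ∑ q ∈ s, f.count q * q.natDegree := Finset.sum_map_toList s _
    rw [h1]
    have h2 : (f.map natDegree).sum = ∑ q ∈ s, f.count q • q.natDegree :=
      Finset.sum_multiset_map_count f natDegree
    have h3 : f.prod.natDegree = (f.map natDegree).sum := natDegree_multiset_prod f hzero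
    simp only [smul_eq_mul] at h2
    rw [← h2, ← h3, hfprod, h4]
  rw [← hprod]
  refine invt_list_prod_mem l ?_ hsum
  intro p hp
  rw [hl, List.mem_map] at hp
  obtain ⟨q, hq, rfl⟩ := hp
  rw [Finset.mem_toList, hs, Multiset.mem_toFinset] at hq
  have hirr : Irreducible q := irreducible_of_normalized_factor q hq
  exact ⟨Multiset.one_le_count_iff_mem.mpr hq, hirr.natDegree_pos, hirr.natDegree_le_two⟩
end

section
open Polynomial UniqueFactorizationMonoid Module

noncomputable section

variable {K : Type*} [Field K] [DecidableEq K] [DecidableEq (Polynomial K)]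

set_option linter.unusedSectionVars false

def submoduleQuotEquiv (μ : K[X]) (hμ : μ.Monic) :
    Submodule K[X] (K[X] ⧸ Ideal.span {μ}) ≃ {t : Multiset K[X] // t ≤ normalizedFactors μ} :=
  ((Submodule.comapMkQRelIso (Ideal.span {μ})).toEquiv.trans
    (idealsEquivMonicDivisors μ hμ)).trans (monicDivisorsEquiv μ hμ)

theorem finite_submodule_quot (μ : K[X]) (hμ : μ.Monic) :
    Finite (Submodule K[X] (K[X] ⧸ Ideal.span {μ})) :=
  Finite.of_equiv _ (submoduleQuotEquiv μ hμ).symm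

lemma card_submodule_quot (μ : K[X]) (hμ : μ.Monic) :
    Nat.card (Submodule K[X] (K[X] ⧸ Ideal.span {μ})) =
      ∏ q ∈ (normalizedFactors μ).toFinset, ((normalizedFactors μ).count q + 1) := by
  rw [Nat.card_congr (submoduleQuotEquiv μ hμ), card_subMultiset]

-- finrank of the quotient
lemma finite_and_finrank_quot (μ : K[X]) (hμ : μ.Monic) :
    Module.Finite K (K[X] ⧸ Ideal.span {μ}) ∧
      Module.finrank K (K[X] ⧸ Ideal.span {μ}) = μ.natDegree := by
  have b : Basis (Fin μ.natDegree) K (K[X] ⧸ Ideal.span {μ}) := AdjoinRoot.powerBasisAux' hμ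
  exact ⟨Module.Finite.of_basis b, by rw [finrank_eq_card_basis b, Fintype.card_fin]⟩
end

section
open Polynomial Module

noncomputable section

abbrev V4 := Fin 4 → ℝ

def STequiv (T : Module.End ℝ V4) :
    {W : Submodule ℝ V4 | ∀ x ∈ W, T x ∈ W} ≃ Submodule ℝ[X] (Module.AEval' T) := by
  have h1 : ∀ W : Submodule ℝ V4,
      (∀ x ∈ W, T x ∈ W) ↔ W ∈ (Algebra.lsmul ℝ ℝ V4 T).invtSubmodule := by
    intro W
    rw [Module.End.mem_invtSubmodule]
    constructor
    · intro h x hx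
      exact h x hx
    · intro h x hx
      exact h hx
  exact (Equiv.subtypeEquivRight h1).trans (Module.AEval.mapSubmodule ℝ V4 T).toEquiv
end

section
open Polynomial UniqueFactorizationMonoid Module

noncomputable section

variable (N : Type) [AddCommGroup N] [Module ℝ N] [Module ℝ[X] N] [IsScalarTower ℝ ℝ[X] N]

lemma exists_cyclic [Finite (Submodule ℝ[X] N)] :
    ∃ v : N, Submodule.span ℝ[X] {v} = ⊤ := by
  by_contra h
  push_neg at h
  have hsfin : {W : Submodule ℝ[X] N | W ≠ ⊤}.Finite := Set.toFinite _
  set F : Finset (Submodule ℝ N) :=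
    (hsfin.image (Submodule.restrictScalars ℝ)).toFinset with hF
  have htop : ⊤ ∉ F := by
    rw [hF, Set.Finite.mem_toFinset]
    rintro ⟨W, hW, hWtop⟩
    apply hW
    rw [eq_top_iff]
    intro x _
    have : x ∈ Submodule.restrictScalars ℝ W := hWtop.symm ▸ Submodule.mem_top
    exact this
  have hcover : ⋃ p ∈ F, (p : Set N) = Set.univ := by
    apply Set.eq_univ_of_forall
    intro x
    simp only [Set.mem_iUnion]
    refine ⟨Submodule.restrictScalars ℝ (Submodule.span ℝ[X] {x}), ?_, ?_⟩
    · rw [hF, Set.Finite.mem_toFinset]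
      exact ⟨_, h x, rfl⟩
    · exact Submodule.mem_span_singleton_self x
  exact Subspace.biUnion_ne_univ_of_top_notMem htop hcover

lemma core_card_mem [Module.Finite ℝ N] (h4 : Module.finrank ℝ N = 4)
    [Finite (Submodule ℝ[X] N)] :
    Nat.card (Submodule ℝ[X] N) ∈ ({3, 4, 5, 6, 8, 9, 12, 16} : Set ℕ) := by
  classical
  obtain ⟨v, hv⟩ := exists_cyclic N
  set φ : ℝ[X] →ₗ[ℝ[X]] N := LinearMap.toSpanSingleton ℝ[X] N v with hφ
  have hsurj : Function.Surjective φ := by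
    rw [← LinearMap.range_eq_top, ← LinearMap.span_singleton_eq_range]
    exact hv
  have e1 : (ℝ[X] ⧸ LinearMap.ker φ) ≃ₗ[ℝ[X]] N := φ.quotKerEquivOfSurjective hsurj
  obtain ⟨g, hg'⟩ := (IsPrincipalIdealRing.principal (LinearMap.ker φ)).principal
  have hg0 : g ≠ 0 := by
    rintro rfl
    rw [show Submodule.span ℝ[X] ({0} : Set ℝ[X]) = ⊥ from Submodule.span_zero_singleton _] at hg'
    have hinj : Function.Injective φ := LinearMap.ker_eq_bot.mp hg'
    have e2 : ℝ[X] ≃ₗ[ℝ[X]] N := LinearEquiv.ofBijective φ ⟨hinj, hsurj⟩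
    have : Module.Finite ℝ ℝ[X] := Module.Finite.equiv (e2.restrictScalars ℝ).symm
    exact Polynomial.not_finite this
  set μ : ℝ[X] := g * Polynomial.C g.leadingCoeff⁻¹ with hμdef
  have hμmonic : μ.Monic := monic_mul_leadingCoeff_inv hg0
  have hassoc : Associated g μ :=
    associated_mul_unit_right g _
      (isUnit_C.mpr (isUnit_iff_ne_zero.mpr (inv_ne_zero (leadingCoeff_ne_zero.mpr hg0))))
  have hsp : Ideal.span {μ} = LinearMap.ker φ := by
    rw [hg']
    exact (Ideal.span_singleton_eq_span_singleton.mpr hassoc).symm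
  have e2 : (ℝ[X] ⧸ Ideal.span {μ}) ≃ₗ[ℝ[X]] N :=
    (Submodule.quotEquivOfEq _ _ hsp).trans e1
  have hcard : Nat.card (Submodule ℝ[X] N) =
      Nat.card (Submodule ℝ[X] (ℝ[X] ⧸ Ideal.span {μ})) :=
    (Nat.card_congr (Submodule.orderIsoMapComap e2).toEquiv).symm
  have hfr : Module.finrank ℝ (ℝ[X] ⧸ Ideal.span {μ}) = 4 := by
    rw [← h4]
    exact (e2.restrictScalars ℝ).finrank_eq
  have hdeg : μ.natDegree = 4 := by
    rw [← (finite_and_finrank_quot μ hμmonic).2, hfr]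
  rw [hcard, card_submodule_quot μ hμmonic]
  exact prod_count_mem μ hμmonic hdeg
end

section
open Polynomial UniqueFactorizationMonoid Module

noncomputable section

lemma realize (F : Multiset ℝ[X]) [DecidableEq ℝ] [DecidableEq ℝ[X]]
    (hmon : ∀ q ∈ F, q.Monic) (hirr : ∀ q ∈ F, Irreducible q)
    (hdeg : (F.map Polynomial.natDegree).sum = 4) :
    ∃ T : Module.End ℝ V4,
      {W : Submodule ℝ V4 | ∀ x ∈ W, T x ∈ W}.Finite ∧
      {W : Submodule ℝ V4 | ∀ x ∈ W, T x ∈ W}.ncard = ∏ q ∈ F.toFinset, (F.count q + 1) := by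
  set μ := F.prod with hμdef
  have hμmonic : μ.Monic := monic_multiset_prod hmon
  have hzero : (0 : ℝ[X]) ∉ F := fun h => (hirr 0 h).ne_zero rfl
  have hdeg4 : μ.natDegree = 4 := by rw [hμdef, natDegree_multiset_prod F hzero, hdeg]
  obtain ⟨hfin, hfr⟩ := finite_and_finrank_quot μ hμmonic
  haveI := hfin
  have hfr4 : Module.finrank ℝ (ℝ[X] ⧸ Ideal.span {μ}) = 4 := by rw [hfr, hdeg4]
  have e : (ℝ[X] ⧸ Ideal.span {μ}) ≃ₗ[ℝ] V4 :=
    LinearEquiv.ofFinrankEq _ _ (by rw [hfr4, Module.finrank_fin_fun])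
  set LX : (ℝ[X] ⧸ Ideal.span {μ}) →ₗ[ℝ] (ℝ[X] ⧸ Ideal.span {μ}) :=
    { toFun := fun m => (X : ℝ[X]) • m
      map_add' := fun x y => smul_add _ x y
      map_smul' := fun r m => by
        show (X : ℝ[X]) • (r • m) = r • ((X : ℝ[X]) • m)
        rw [← algebraMap_smul ℝ[X] r m, ← mul_smul, mul_comm, mul_smul, algebraMap_smul] } with hLX
  set T : Module.End ℝ V4 := (e.toLinearMap ∘ₗ LX) ∘ₗ e.symm.toLinearMap with hT
  have eA : Module.AEval' T ≃ₗ[ℝ[X]] (ℝ[X] ⧸ Ideal.span {μ}) :=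
    LinearEquiv.ofAEval T e.symm (fun m => by
      show e.symm (T m) = (X : ℝ[X]) • e.symm m
      rw [hT]
      simp [hLX])
  have hisoQ : Submodule ℝ[X] (Module.AEval' T) ≃ Submodule ℝ[X] (ℝ[X] ⧸ Ideal.span {μ}) :=
    (Submodule.orderIsoMapComap eA).toEquiv
  haveI := finite_submodule_quot μ hμmonic
  haveI hfinS : Finite (Submodule ℝ[X] (Module.AEval' T)) :=
    Finite.of_equiv _ hisoQ.symm
  have hNF : normalizedFactors μ = F := by
    rw [hμdef, normalizedFactors_prod_eq _ hirr]
    rw [show Multiset.map normalize F = Multiset.map id F from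
      Multiset.map_congr rfl fun q hq => (hmon q hq).normalize_eq_self]
    exact Multiset.map_id _
  have hcardQ : Nat.card (Submodule ℝ[X] (ℝ[X] ⧸ Ideal.span {μ})) =
      ∏ q ∈ F.toFinset, (F.count q + 1) := by
    rw [card_submodule_quot μ hμmonic, hNF]
  refine ⟨T, ?_, ?_⟩
  · rw [← Set.finite_coe_iff]
    exact Finite.of_equiv _ (STequiv T).symm
  · rw [← Nat.card_coe_set_eq]
    rw [Nat.card_congr ((STequiv T).trans hisoQ), hcardQ]
end

section
open Polynomial Module

theorem stmt_15 :
    {m : ℕ | ∃ T : Module.End ℝ (Fin 4 → ℝ),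
      {W : Submodule ℝ (Fin 4 → ℝ) | ∀ x ∈ W, T x ∈ W}.Finite ∧
      {W : Submodule ℝ (Fin 4 → ℝ) | ∀ x ∈ W, T x ∈ W}.ncard = m} =
    {3, 4, 5, 6, 8, 9, 12, 16} := by
  classical
  ext m
  simp only [Set.mem_setOf_eq]
  constructor
  · rintro ⟨T, hfin, rfl⟩
    haveI hc : Finite ↥{W : Submodule ℝ V4 | ∀ x ∈ W, T x ∈ W} := Set.finite_coe_iff.mpr hfin
    haveI : Finite (Submodule ℝ[X] (Module.AEval' T)) := Finite.of_equiv _ (STequiv T)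
    have h4 : Module.finrank ℝ (Module.AEval' T) = 4 := by
      rw [← (Module.AEval.of ℝ V4 T).finrank_eq, Module.finrank_fin_fun]
    rw [← Nat.card_coe_set_eq, Nat.card_congr (STequiv T)]
    exact core_card_mem (Module.AEval' T) h4
  · intro hm
    simp only [Set.mem_insert_iff, Set.mem_singleton_iff] at hm
    have hmonX : (X : ℝ[X]).Monic := monic_X
    have hmon1 : ((X : ℝ[X]) - C 1).Monic := monic_X_sub_C 1
    have hmon2 : ((X : ℝ[X]) - C 2).Monic := monic_X_sub_C 2
    have hmon3 : ((X : ℝ[X]) - C 3).Monic := monic_X_sub_C 3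
    have hmonq1 : ((X : ℝ[X]) ^ 2 + C 1).Monic := monic_X_pow_add_C 1 two_ne_zero
    have hmonq2 : ((X : ℝ[X]) ^ 2 + C 2).Monic := monic_X_pow_add_C 2 two_ne_zero
    have hirrX : Irreducible (X : ℝ[X]) := irreducible_X
    have hirr1 : Irreducible ((X : ℝ[X]) - C 1) := irreducible_X_sub_C 1
    have hirr2 : Irreducible ((X : ℝ[X]) - C 2) := irreducible_X_sub_C 2
    have hirr3 : Irreducible ((X : ℝ[X]) - C 3) := irreducible_X_sub_C 3
    have hirrq1 : Irreducible ((X : ℝ[X]) ^ 2 + C 1) := irred_X_sq_add_C 1 one_pos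
    have hirrq2 : Irreducible ((X : ℝ[X]) ^ 2 + C 2) := irred_X_sq_add_C 2 two_pos
    rcases hm with rfl | rfl | rfl | rfl | rfl | rfl | rfl | rfl
    · -- 3 : (X²+1)²
      obtain ⟨T, h1, h2⟩ := realize {(X : ℝ[X]) ^ 2 + C 1, (X : ℝ[X]) ^ 2 + C 1}
        (by intro q hq; simp only [Multiset.insert_eq_cons, Multiset.mem_cons, Multiset.mem_singleton] at hq
            rcases hq with rfl | rfl <;> assumption)
        (by intro q hq; simp only [Multiset.insert_eq_cons, Multiset.mem_cons, Multiset.mem_singleton] at hq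
            rcases hq with rfl | rfl <;> assumption)
        (by simp only [Multiset.insert_eq_cons, Multiset.map_cons, Multiset.map_singleton, Multiset.sum_cons, Multiset.sum_singleton, natDegree_X_pow_add_C, natDegree_X, natDegree_X_sub_C] <;> omega)
      exact ⟨T, h1, by rw [h2, prodcH]⟩
    · -- 4 : (X²+1)(X²+2)
      obtain ⟨T, h1, h2⟩ := realize {(X : ℝ[X]) ^ 2 + C 1, (X : ℝ[X]) ^ 2 + C 2}
        (by intro q hq; simp only [Multiset.insert_eq_cons, Multiset.mem_cons, Multiset.mem_singleton] at hq
            rcases hq with rfl | rfl <;> assumption)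
        (by intro q hq; simp only [Multiset.insert_eq_cons, Multiset.mem_cons, Multiset.mem_singleton] at hq
            rcases hq with rfl | rfl <;> assumption)
        (by simp only [Multiset.insert_eq_cons, Multiset.map_cons, Multiset.map_singleton, Multiset.sum_cons, Multiset.sum_singleton, natDegree_X_pow_add_C, natDegree_X, natDegree_X_sub_C] <;> omega)
      exact ⟨T, h1, by rw [h2, prodcG _ _ (neQQ 1 2 (by norm_num))]⟩
    · -- 5 : X⁴
      obtain ⟨T, h1, h2⟩ := realize {(X : ℝ[X]), X, X, X}
        (by intro q hq; simp only [Multiset.insert_eq_cons, Multiset.mem_cons, Multiset.mem_singleton] at hq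
            rcases hq with rfl | rfl | rfl | rfl <;> assumption)
        (by intro q hq; simp only [Multiset.insert_eq_cons, Multiset.mem_cons, Multiset.mem_singleton] at hq
            rcases hq with rfl | rfl | rfl | rfl <;> assumption)
        (by simp only [Multiset.insert_eq_cons, Multiset.map_cons, Multiset.map_singleton, Multiset.sum_cons, Multiset.sum_singleton, natDegree_X_pow_add_C, natDegree_X, natDegree_X_sub_C] <;> omega)
      exact ⟨T, h1, by rw [h2, prodcA]⟩
    · -- 6 : X²(X²+1)
      obtain ⟨T, h1, h2⟩ := realize {(X : ℝ[X]), X, (X : ℝ[X]) ^ 2 + C 1}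
        (by intro q hq; simp only [Multiset.insert_eq_cons, Multiset.mem_cons, Multiset.mem_singleton] at hq
            rcases hq with rfl | rfl | rfl <;> assumption)
        (by intro q hq; simp only [Multiset.insert_eq_cons, Multiset.mem_cons, Multiset.mem_singleton] at hq
            rcases hq with rfl | rfl | rfl <;> assumption)
        (by simp only [Multiset.insert_eq_cons, Multiset.map_cons, Multiset.map_singleton, Multiset.sum_cons, Multiset.sum_singleton, natDegree_X_pow_add_C, natDegree_X, natDegree_X_sub_C] <;> omega)
      exact ⟨T, h1, by rw [h2, prodcF _ _ (neXQ 1)]⟩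
    · -- 8 : X³(X-1)
      obtain ⟨T, h1, h2⟩ := realize {(X : ℝ[X]), X, X, (X : ℝ[X]) - C 1}
        (by intro q hq; simp only [Multiset.insert_eq_cons, Multiset.mem_cons, Multiset.mem_singleton] at hq
            rcases hq with rfl | rfl | rfl | rfl <;> assumption)
        (by intro q hq; simp only [Multiset.insert_eq_cons, Multiset.mem_cons, Multiset.mem_singleton] at hq
            rcases hq with rfl | rfl | rfl | rfl <;> assumption)
        (by simp only [Multiset.insert_eq_cons, Multiset.map_cons, Multiset.map_singleton, Multiset.sum_cons, Multiset.sum_singleton, natDegree_X_pow_add_C, natDegree_X, natDegree_X_sub_C] <;> omega)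
      exact ⟨T, h1, by rw [h2, prodcB _ _ (neXC 1 one_ne_zero)]⟩
    · -- 9 : X²(X-1)²
      obtain ⟨T, h1, h2⟩ := realize {(X : ℝ[X]), X, (X : ℝ[X]) - C 1, (X : ℝ[X]) - C 1}
        (by intro q hq; simp only [Multiset.insert_eq_cons, Multiset.mem_cons, Multiset.mem_singleton] at hq
            rcases hq with rfl | rfl | rfl | rfl <;> assumption)
        (by intro q hq; simp only [Multiset.insert_eq_cons, Multiset.mem_cons, Multiset.mem_singleton] at hq
            rcases hq with rfl | rfl | rfl | rfl <;> assumption)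
        (by simp only [Multiset.insert_eq_cons, Multiset.map_cons, Multiset.map_singleton, Multiset.sum_cons, Multiset.sum_singleton, natDegree_X_pow_add_C, natDegree_X, natDegree_X_sub_C] <;> omega)
      exact ⟨T, h1, by rw [h2, prodcC _ _ (neXC 1 one_ne_zero)]⟩
    · -- 12 : X²(X-1)(X-2)
      obtain ⟨T, h1, h2⟩ := realize {(X : ℝ[X]), X, (X : ℝ[X]) - C 1, (X : ℝ[X]) - C 2}
        (by intro q hq; simp only [Multiset.insert_eq_cons, Multiset.mem_cons, Multiset.mem_singleton] at hq
            rcases hq with rfl | rfl | rfl | rfl <;> assumption)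
        (by intro q hq; simp only [Multiset.insert_eq_cons, Multiset.mem_cons, Multiset.mem_singleton] at hq
            rcases hq with rfl | rfl | rfl | rfl <;> assumption)
        (by simp only [Multiset.insert_eq_cons, Multiset.map_cons, Multiset.map_singleton, Multiset.sum_cons, Multiset.sum_singleton, natDegree_X_pow_add_C, natDegree_X, natDegree_X_sub_C] <;> omega)
      exact ⟨T, h1, by rw [h2, prodcD _ _ _ (neXC 1 one_ne_zero) (neXC 2 two_ne_zero)
        (neCC 1 2 (by norm_num))]⟩
    · -- 16 : X(X-1)(X-2)(X-3)
      obtain ⟨T, h1, h2⟩ := realize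
        {(X : ℝ[X]), (X : ℝ[X]) - C 1, (X : ℝ[X]) - C 2, (X : ℝ[X]) - C 3}
        (by intro q hq; simp only [Multiset.insert_eq_cons, Multiset.mem_cons, Multiset.mem_singleton] at hq
            rcases hq with rfl | rfl | rfl | rfl <;> assumption)
        (by intro q hq; simp only [Multiset.insert_eq_cons, Multiset.mem_cons, Multiset.mem_singleton] at hq
            rcases hq with rfl | rfl | rfl | rfl <;> assumption)
        (by simp only [Multiset.insert_eq_cons, Multiset.map_cons, Multiset.map_singleton, Multiset.sum_cons, Multiset.sum_singleton, natDegree_X_pow_add_C, natDegree_X, natDegree_X_sub_C] <;> omega)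
      exact ⟨T, h1, by rw [h2, prodcE _ _ _ _ (neXC 1 one_ne_zero) (neXC 2 two_ne_zero)
        (neXC 3 three_ne_zero) (neCC 1 2 (by norm_num)) (neCC 1 3 (by norm_num))
        (neCC 2 3 (by norm_num))]⟩
end
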